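/- Let A, B be one-variable formal power series and P a q-variable formal power series over ℂ. If A∘P, B∘P and (AB)∘P all exist, then (A∘P)(B∘P) = (AB)∘P. -/

import Mathlib

open Filter Finset

/-- If the partial sums of `f` converge, then `fun n => f n * z ^ n` is absolutely
summable for `‖z‖ < 1`. -/
private lemma aux_summable_norm {f : ℕ → ℂ} {l : ℂ}
    (h : Tendsto (fun N => ∑ n ∈ Finset.range N, f n) atTop (nhds l))
    {z : ℂ} (hz : ‖z‖ < 1) : Summable (fun n => ‖f n * z ^ n‖) := by
  have h0 : Tendsto f atTop (nhds 0) := by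
    have h1 := (h.comp (tendsto_add_atTop_nat 1)).sub h
    simp only [sub_self] at h1
    refine h1.congr fun n => ?_
    simp [Finset.sum_range_succ]
  obtain ⟨C, hC⟩ := (h0.norm.bddAbove_range).imp (fun C hC n => hC ⟨n, rfl⟩)
  refine Summable.of_nonneg_of_le (fun n => norm_nonneg _)
    (fun n => ?_) ((summable_geometric_of_lt_one (norm_nonneg z) hz).mul_left C)
  rw [norm_mul, norm_pow]
  exact mul_le_mul_of_nonneg_right (hC n) (by positivity)

set_option maxHeartbeats 1000000 in
theorem mv_right_distributive_law_complex {q : ℕ}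
    (A B : PowerSeries ℂ) (P : MvPowerSeries (Fin q) ℂ)
    (FA FB FC : (Fin q →₀ ℕ) → ℂ)
    (hAP : ∀ c, Tendsto (fun N => ∑ n ∈ Finset.range N,
      PowerSeries.coeff n A * MvPowerSeries.coeff c (P ^ n)) atTop (nhds (FA c)))
    (hBP : ∀ c, Tendsto (fun N => ∑ n ∈ Finset.range N,
      PowerSeries.coeff n B * MvPowerSeries.coeff c (P ^ n)) atTop (nhds (FB c)))
    (hABP : ∀ c, Tendsto (fun N => ∑ n ∈ Finset.range N,
      PowerSeries.coeff n (A * B) * MvPowerSeries.coeff c (P ^ n)) atTop (nhds (FC c))) :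
    ∀ c : Fin q →₀ ℕ, ∑ p ∈ Finset.HasAntidiagonal.antidiagonal c, FA p.1 * FB p.2 = FC c := by
  intro c
  set fA : (Fin q →₀ ℕ) → ℕ → ℂ :=
    fun a n => PowerSeries.coeff n A * MvPowerSeries.coeff a (P ^ n) with hfA
  set fB : (Fin q →₀ ℕ) → ℕ → ℂ :=
    fun a n => PowerSeries.coeff n B * MvPowerSeries.coeff a (P ^ n) with hfB
  set fC : ℕ → ℂ :=
    fun n => PowerSeries.coeff n (A * B) * MvPowerSeries.coeff c (P ^ n) with hfC
  set L : Filter ℂ := (nhdsWithin (1 : ℝ) (Set.Iio 1)).map Complex.ofReal with hLdef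
  have hne : L.NeBot := Filter.map_neBot
  -- Abel limits for the three series
  have hA' : ∀ a, Tendsto (fun z : ℂ => ∑' n, fA a n * z ^ n) L (nhds (FA a)) :=
    fun a => Complex.tendsto_tsum_powerSeries_nhdsWithin_lt (hAP a)
  have hB' : ∀ a, Tendsto (fun z : ℂ => ∑' n, fB a n * z ^ n) L (nhds (FB a)) :=
    fun a => Complex.tendsto_tsum_powerSeries_nhdsWithin_lt (hBP a)
  have hC' : Tendsto (fun z : ℂ => ∑' n, fC n * z ^ n) L (nhds (FC c)) :=
    Complex.tendsto_tsum_powerSeries_nhdsWithin_lt (hABP c)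
  -- for ‖z‖ < 1 the three "generating functions" satisfy the product identity
  have key : ∀ z : ℂ, ‖z‖ < 1 →
      ∑ p ∈ Finset.HasAntidiagonal.antidiagonal c, (∑' n, fA p.1 n * z ^ n) * (∑' n, fB p.2 n * z ^ n)
        = ∑' n, fC n * z ^ n := by
    intro z hz
    have sA : ∀ a, Summable (fun n => ‖fA a n * z ^ n‖) :=
      fun a => aux_summable_norm (hAP a) hz
    have sB : ∀ a, Summable (fun n => ‖fB a n * z ^ n‖) :=
      fun a => aux_summable_norm (hBP a) hz
    -- Cauchy product for each pair
    have step1 : ∀ p ∈ Finset.HasAntidiagonal.antidiagonal c,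
        (∑' n, fA p.1 n * z ^ n) * (∑' n, fB p.2 n * z ^ n)
          = ∑' n, ∑ kl ∈ Finset.HasAntidiagonal.antidiagonal n,
              (fA p.1 kl.1 * z ^ kl.1) * (fB p.2 kl.2 * z ^ kl.2) := fun p _ =>
      tsum_mul_tsum_eq_tsum_sum_antidiagonal_of_summable_norm (sA p.1) (sB p.2)
    have step2 : (∑' n, ∑ p ∈ Finset.HasAntidiagonal.antidiagonal c, ∑ kl ∈ Finset.HasAntidiagonal.antidiagonal n,
          (fA p.1 kl.1 * z ^ kl.1) * (fB p.2 kl.2 * z ^ kl.2))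
        = ∑ p ∈ Finset.HasAntidiagonal.antidiagonal c, ∑' n, ∑ kl ∈ Finset.HasAntidiagonal.antidiagonal n,
          (fA p.1 kl.1 * z ^ kl.1) * (fB p.2 kl.2 * z ^ kl.2) :=
      Summable.tsum_finsetSum (fun p _ =>
        (summable_norm_sum_mul_antidiagonal_of_summable_norm (sA p.1) (sB p.2)).of_norm)
    have step3 : ∀ n : ℕ, ∑ p ∈ Finset.HasAntidiagonal.antidiagonal c, ∑ kl ∈ Finset.HasAntidiagonal.antidiagonal n,
          (fA p.1 kl.1 * z ^ kl.1) * (fB p.2 kl.2 * z ^ kl.2) = fC n * z ^ n := by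
      intro n
      rw [Finset.sum_comm]
      rw [hfC]
      simp only [PowerSeries.coeff_mul]
      rw [Finset.sum_mul, Finset.sum_mul]
      refine Finset.sum_congr rfl fun kl hkl => ?_
      have hk : kl.1 + kl.2 = n := Finset.HasAntidiagonal.mem_antidiagonal.mp hkl
      rw [← hk, pow_add P, pow_add z, MvPowerSeries.coeff_mul, Finset.mul_sum, Finset.sum_mul]
      simp only [hfA, hfB]
      exact Finset.sum_congr rfl fun p _ => by ring
    calc ∑ p ∈ Finset.HasAntidiagonal.antidiagonal c, (∑' n, fA p.1 n * z ^ n) * (∑' n, fB p.2 n * z ^ n)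
        = ∑ p ∈ Finset.HasAntidiagonal.antidiagonal c, ∑' n, ∑ kl ∈ Finset.HasAntidiagonal.antidiagonal n,
            (fA p.1 kl.1 * z ^ kl.1) * (fB p.2 kl.2 * z ^ kl.2) :=
          Finset.sum_congr rfl step1
      _ = ∑' n, ∑ p ∈ Finset.HasAntidiagonal.antidiagonal c, ∑ kl ∈ Finset.HasAntidiagonal.antidiagonal n,
            (fA p.1 kl.1 * z ^ kl.1) * (fB p.2 kl.2 * z ^ kl.2) := step2.symm
      _ = ∑' n, fC n * z ^ n := tsum_congr step3
  -- conclude by uniqueness of limits along L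
  have hProd : Tendsto
      (fun z : ℂ => ∑ p ∈ Finset.HasAntidiagonal.antidiagonal c,
        (∑' n, fA p.1 n * z ^ n) * (∑' n, fB p.2 n * z ^ n)) L
      (nhds (∑ p ∈ Finset.HasAntidiagonal.antidiagonal c, FA p.1 * FB p.2)) :=
    tendsto_finset_sum _ fun p _ => (hA' p.1).mul (hB' p.2)
  have hEv : ∀ᶠ z in L,
      (∑ p ∈ Finset.HasAntidiagonal.antidiagonal c,
        (∑' n, fA p.1 n * z ^ n) * (∑' n, fB p.2 n * z ^ n)) = ∑' n, fC n * z ^ n := by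
    rw [hLdef, Filter.eventually_map]
    have hmem : Set.Ioo (-1 : ℝ) 1 ∈ nhdsWithin (1 : ℝ) (Set.Iio 1) :=
      Ioo_mem_nhdsLT (by norm_num)
    filter_upwards [hmem] with x hx
    refine key _ ?_
    rw [Complex.norm_real, Real.norm_eq_abs, abs_lt]
    exact ⟨hx.1, hx.2⟩
  exact tendsto_nhds_unique (hProd.congr' hEv) hC'
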